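/- arXiv:2306.03440 — 4 statements merged into one kernel-verified Lean document; each statement's English description precedes it below -/
import Mathlib

section
/- Let K ≥ 1, N ≥ 2, p > K, and let ℓ : ℝ^K × ℝ^K → ℝ be any function. Fix W ∈ ℝ^{K×p}, b ∈ ℝ^K, regularization parameters λ_W, λ_b ≥ 0, and define the training loss L(W,b,H) = (1/(KN))·∑_{k=1}^K ∑_{i=1}^N ℓ(W h_{k,i} + b, e_k) + (λ_W/2)·‖W‖_F² + (λ_b/2)·‖b‖², where H = (h_{k,i}) is a family of feature vectors in ℝ^p and e_k is the k-th standard basis vector of ℝ^K. Then for every family of features H and every constant C > 0 there exists a family of features H′ = (h′_{k,i}) in ℝ^p such that L(W,b,H′) = L(W,b,H), Σ_B(H′) = Σ_B(H), and ‖Σ_W(H′)‖_F > C. -/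
open Matrix Finset

noncomputable section

/-- The `k`-th class mean `μ_k = (1/N) ∑_i h_{k,i}`. -/
def classMean {K N p : ℕ} (H : Fin K → Fin N → (Fin p → ℝ)) (k : Fin K) : Fin p → ℝ :=
  (N : ℝ)⁻¹ • ∑ i, H k i

/-- The global mean `μ_G = (1/(KN)) ∑_{k,i} h_{k,i}`. -/
def globalMean {K N p : ℕ} (H : Fin K → Fin N → (Fin p → ℝ)) : Fin p → ℝ :=
  ((K : ℝ) * (N : ℝ))⁻¹ • ∑ k, ∑ i, H k i

/-- Within-class covariance `Σ_W = (1/(KN)) ∑_{k,i} (h_{k,i} − μ_k)(h_{k,i} − μ_k)ᵀ`. -/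
def SigmaW {K N p : ℕ} (H : Fin K → Fin N → (Fin p → ℝ)) : Matrix (Fin p) (Fin p) ℝ :=
  ((K : ℝ) * (N : ℝ))⁻¹ •
    ∑ k, ∑ i, vecMulVec (H k i - classMean H k) (H k i - classMean H k)

/-- Between-class covariance `Σ_B = (1/K) ∑_k (μ_k − μ_G)(μ_k − μ_G)ᵀ`. -/
def SigmaB {K N p : ℕ} (H : Fin K → Fin N → (Fin p → ℝ)) : Matrix (Fin p) (Fin p) ℝ :=
  (K : ℝ)⁻¹ • ∑ k, vecMulVec (classMean H k - globalMean H) (classMean H k - globalMean H)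

/-- Overall covariance `Σ_T = (1/(KN)) ∑_{k,i} (h_{k,i} − μ_G)(h_{k,i} − μ_G)ᵀ`. -/
def SigmaT {K N p : ℕ} (H : Fin K → Fin N → (Fin p → ℝ)) : Matrix (Fin p) (Fin p) ℝ :=
  ((K : ℝ) * (N : ℝ))⁻¹ •
    ∑ k, ∑ i, vecMulVec (H k i - globalMean H) (H k i - globalMean H)

/-- Regularized training loss
`L(W,b,H) = (1/(KN)) ∑_{k,i} ℓ(W h_{k,i} + b, e_k) + (λ_W/2)‖W‖_F² + (λ_b/2)‖b‖²`. -/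
def trainLoss {K N p : ℕ} (ℓ : (Fin K → ℝ) × (Fin K → ℝ) → ℝ) (lamW lamb : ℝ)
    (W : Matrix (Fin K) (Fin p) ℝ) (b : Fin K → ℝ)
    (H : Fin K → Fin N → (Fin p → ℝ)) : ℝ :=
  ((K : ℝ) * (N : ℝ))⁻¹ * ∑ k, ∑ i, ℓ (W.mulVec (H k i) + b, Pi.single k 1)
    + lamW / 2 * ∑ k, ∑ j, (W k j) ^ 2 + lamb / 2 * ∑ k, (b k) ^ 2

/-- **Proposition 1 (full collapse is not necessary for loss minimization).**
For `K ≥ 1`, `N ≥ 2`, `p > K`, any loss `ℓ`, any fixed `W, b`, any regularization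
parameters `λ_W, λ_b ≥ 0`, any features `H` and any `C > 0`, there are features `H'` with the
same training loss and the same between-class covariance, but with `‖Σ_W(H')‖_F > C`. -/
theorem exists_same_loss_large_within_class_covariance
    {K N p : ℕ} (hK : 1 ≤ K) (hN : 2 ≤ N) (hp : K < p)
    (ℓ : (Fin K → ℝ) × (Fin K → ℝ) → ℝ)
    (W : Matrix (Fin K) (Fin p) ℝ) (b : Fin K → ℝ)
    (lamW lamb : ℝ) (hlamW : 0 ≤ lamW) (hlamb : 0 ≤ lamb)
    (H : Fin K → Fin N → (Fin p → ℝ)) (C : ℝ) (hC : 0 < C) :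
    ∃ H' : Fin K → Fin N → (Fin p → ℝ),
      trainLoss ℓ lamW lamb W b H' = trainLoss ℓ lamW lamb W b H ∧
      SigmaB H' = SigmaB H ∧
      C < Real.sqrt (∑ i, ∑ j, (SigmaW H' i j) ^ 2) := by
  -- a nonzero vector in the kernel of W
  obtain ⟨v, hv0, hvW⟩ : ∃ v : Fin p → ℝ, v ≠ 0 ∧ W.mulVec v = 0 := by
    by_contra h
    push_neg at h
    have hinj : Function.Injective W.mulVecLin := by
      rw [← LinearMap.ker_eq_bot, LinearMap.ker_eq_bot']
      intro m hm
      by_contra hm0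
      exact h m hm0 (by simpa using hm)
    have hle := LinearMap.finrank_le_finrank_of_injective hinj
    simp [Module.finrank_fintype_fun_eq_card] at hle
    omega
  obtain ⟨j0, hj0⟩ : ∃ j0, v j0 ≠ 0 := by
    by_contra h
    push_neg at h
    exact hv0 (funext fun j => h j)
  have hKpos : (0:ℝ) < (K:ℝ) := by exact_mod_cast Nat.lt_of_lt_of_le Nat.zero_lt_one hK
  have hNpos : (0:ℝ) < (N:ℝ) := by
    have : 0 < N := by omega
    exact_mod_cast this
  have hKN : (0:ℝ) < (K:ℝ) * (N:ℝ) := mul_pos hKpos hNpos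
  set i0 : Fin N := ⟨0, by omega⟩ with hi0
  set i1 : Fin N := ⟨1, by omega⟩ with hi1
  set k0 : Fin K := ⟨0, by omega⟩ with hk0
  have hii : i0 ≠ i1 := by simp [hi0, hi1, Fin.ext_iff]
  set M : ℝ := Real.sqrt ((K:ℝ) * (N:ℝ) * C) + 1 with hM
  set t : ℝ := (M - (H k0 i0 j0 - classMean H k0 j0)) / v j0 with ht
  set c : Fin N → ℝ := fun i => (Pi.single i0 t : Fin N → ℝ) i - (Pi.single i1 t : Fin N → ℝ) i with hcdef
  have hcsum : ∑ i, c i = 0 := by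
    simp [hcdef, Finset.sum_sub_distrib]
  have hci0 : c i0 = t := by
    simp [hcdef, Pi.single_eq_same, Pi.single_eq_of_ne hii]
  set H' : Fin K → Fin N → (Fin p → ℝ) := fun k i => H k i + c i • v with hH'
  have hmean : ∀ k, classMean H' k = classMean H k := by
    intro k
    unfold classMean
    congr 1
    simp only [hH']
    rw [Finset.sum_add_distrib, ← Finset.sum_smul, hcsum, zero_smul, add_zero]
  have hg : globalMean H' = globalMean H := by
    unfold globalMean
    congr 1
    simp only [hH']
    refine Finset.sum_congr rfl fun k _ => ?_
    rw [Finset.sum_add_distrib, ← Finset.sum_smul, hcsum, zero_smul, add_zero]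
  have hB : SigmaB H' = SigmaB H := by
    unfold SigmaB
    simp only [hmean, hg]
  have harg : ∀ k i, W.mulVec (H' k i) = W.mulVec (H k i) := by
    intro k i
    simp [hH', Matrix.mulVec_add, Matrix.mulVec_smul, hvW]
  have hloss : trainLoss ℓ lamW lamb W b H' = trainLoss ℓ lamW lamb W b H := by
    unfold trainLoss
    simp only [harg]
  -- key pointwise value
  have key : H' k0 i0 j0 - classMean H' k0 j0 = M := by
    rw [hmean k0]
    simp only [hH', Pi.add_apply, Pi.smul_apply, smul_eq_mul, hci0]
    rw [ht]
    field_simp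
    ring
  have hentry : SigmaW H' j0 j0
      = ((K:ℝ) * (N:ℝ))⁻¹ * ∑ k, ∑ i, (H' k i j0 - classMean H' k j0) ^ 2 := by
    simp [SigmaW, Matrix.sum_apply, vecMulVec_apply, sq]
  have hSge : ((K:ℝ) * (N:ℝ))⁻¹ * M ^ 2 ≤ SigmaW H' j0 j0 := by
    rw [hentry]
    apply mul_le_mul_of_nonneg_left _ (le_of_lt (inv_pos.mpr hKN))
    calc M ^ 2 = (H' k0 i0 j0 - classMean H' k0 j0) ^ 2 := by rw [key]
      _ ≤ ∑ i, (H' k0 i j0 - classMean H' k0 j0) ^ 2 :=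
          Finset.single_le_sum (f := fun i => (H' k0 i j0 - classMean H' k0 j0) ^ 2)
            (fun i _ => sq_nonneg _) (Finset.mem_univ i0)
      _ ≤ ∑ k, ∑ i, (H' k i j0 - classMean H' k j0) ^ 2 :=
          Finset.single_le_sum
            (f := fun k => ∑ i, (H' k i j0 - classMean H' k j0) ^ 2)
            (fun k _ => Finset.sum_nonneg fun i _ => sq_nonneg _) (Finset.mem_univ k0)
  have h1 : (K:ℝ) * (N:ℝ) * C < M ^ 2 := by
    have hs := Real.sq_sqrt (show (0:ℝ) ≤ (K:ℝ) * (N:ℝ) * C by positivity)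
    nlinarith [Real.sqrt_nonneg ((K:ℝ) * (N:ℝ) * C)]
  have h2 : C < ((K:ℝ) * (N:ℝ))⁻¹ * M ^ 2 := by
    rw [inv_mul_eq_div, lt_div_iff₀ hKN]
    nlinarith [h1]
  have hCe : C < SigmaW H' j0 j0 := lt_of_lt_of_le h2 hSge
  refine ⟨H', hloss, hB, ?_⟩
  have hsum2 : (SigmaW H' j0 j0) ^ 2 ≤ ∑ i, ∑ j, (SigmaW H' i j) ^ 2 := by
    calc (SigmaW H' j0 j0) ^ 2 ≤ ∑ j, (SigmaW H' j0 j) ^ 2 :=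
          Finset.single_le_sum (f := fun j => (SigmaW H' j0 j) ^ 2)
            (fun _ _ => sq_nonneg _) (Finset.mem_univ j0)
      _ ≤ ∑ i, ∑ j, (SigmaW H' i j) ^ 2 :=
          Finset.single_le_sum
            (f := fun i => ∑ j, (SigmaW H' i j) ^ 2)
            (fun _ _ => Finset.sum_nonneg fun _ _ => sq_nonneg _) (Finset.mem_univ j0)
  calc C < SigmaW H' j0 j0 := hCe
    _ ≤ |SigmaW H' j0 j0| := le_abs_self _
    _ = Real.sqrt ((SigmaW H' j0 j0) ^ 2) := (Real.sqrt_sq_eq_abs _).symm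
    _ ≤ Real.sqrt (∑ i, ∑ j, (SigmaW H' i j) ^ 2) := Real.sqrt_le_sqrt hsum2
end
end

section
/- Let A and B be real symmetric positive semidefinite p×p matrices such that B − A is positive semidefinite. Then Tr[B† A] ≤ rank(A). -/
open Matrix

noncomputable section

/-- `Ad` is the Moore–Penrose pseudoinverse of `A`: the four Penrose conditions. -/
def IsMoorePenrose {p : ℕ} (A Ad : Matrix (Fin p) (Fin p) ℝ) : Prop :=
  A * Ad * A = A ∧ Ad * A * Ad = Ad ∧ (A * Ad)ᵀ = A * Ad ∧ (Ad * A)ᵀ = Ad * A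

lemma mp_unique {p : ℕ} (B X Y : Matrix (Fin p) (Fin p) ℝ)
    (hX : IsMoorePenrose B X) (hY : IsMoorePenrose B Y) : X = Y := by
  obtain ⟨hX1, hX2, hX3, hX4⟩ := hX
  obtain ⟨hY1, hY2, hY3, hY4⟩ := hY
  have hBX : B * X = B * Y := by
    calc B * X = (B * X)ᵀ := hX3.symm
      _ = Xᵀ * Bᵀ := by rw [transpose_mul]
      _ = Xᵀ * (B * Y * B)ᵀ := by rw [hY1]
      _ = Xᵀ * (Bᵀ * (B * Y)ᵀ) := by simp only [transpose_mul, mul_assoc]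
      _ = (B * X)ᵀ * (B * Y)ᵀ := by simp only [transpose_mul, mul_assoc]
      _ = (B * X) * (B * Y) := by rw [hX3, hY3]
      _ = (B * X * B) * Y := by rw [mul_assoc, mul_assoc, mul_assoc]
      _ = B * Y := by rw [hX1]
  have hXB : X * B = Y * B := by
    calc X * B = (X * B)ᵀ := hX4.symm
      _ = Bᵀ * Xᵀ := by rw [transpose_mul]
      _ = (B * Y * B)ᵀ * Xᵀ := by rw [hY1]
      _ = (Y * B)ᵀ * Bᵀ * Xᵀ := by simp only [transpose_mul, mul_assoc]
      _ = (Y * B)ᵀ * (X * B)ᵀ := by simp only [transpose_mul, mul_assoc]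
      _ = (Y * B) * (X * B) := by rw [hX4, hY4]
      _ = Y * (B * X * B) := by simp only [mul_assoc]
      _ = Y * B := by rw [hX1]
  calc X = X * B * X := hX2.symm
    _ = X * (B * Y) := by rw [mul_assoc, hBX]
    _ = (X * B) * Y := by rw [mul_assoc]
    _ = Y * B * Y := by rw [hXB]
    _ = Y := hY2

/-- If `A`, `B` are real symmetric PSD matrices with `B − A` PSD, then `Tr[B† A] ≤ rank A`. -/
theorem trace_pinv_mul_le_rank {p : ℕ} (A B : Matrix (Fin p) (Fin p) ℝ)
    (hA : A.PosSemidef) (hB : B.PosSemidef) (hBA : (B - A).PosSemidef)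
    (Bd : Matrix (Fin p) (Fin p) ℝ) (hBd : IsMoorePenrose B Bd) :
    (Bd * A).trace ≤ (A.rank : ℝ) := by
  have hBsym : Bᵀ = B := by
    have h : Bᴴ = B := hB.1
    rwa [conjTranspose_eq_transpose_of_trivial] at h
  -- Bd is symmetric
  have hBdT : IsMoorePenrose B Bdᵀ := by
    obtain ⟨h1, h2, h3, h4⟩ := hBd
    refine ⟨?_, ?_, ?_, ?_⟩
    · have := congrArg transpose h1
      rwa [transpose_mul, transpose_mul, hBsym, ← mul_assoc] at this
    · have := congrArg transpose h2
      rwa [transpose_mul, transpose_mul, hBsym, ← mul_assoc] at this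
    · have : (B * Bdᵀ)ᵀ = B * Bdᵀ := by
        rw [transpose_mul, transpose_transpose, hBsym, ← h4, transpose_mul, hBsym]
      exact this
    · rw [transpose_mul, transpose_transpose, hBsym, ← h3, transpose_mul, hBsym]
  have hBdsym : Bdᵀ = Bd := mp_unique B Bdᵀ Bd hBdT hBd
  obtain ⟨hB1, hB2, hB3, hB4⟩ := hBd
  have hBdPSD : Bd.PosSemidef := by
    have h := hB.conjTranspose_mul_mul_same Bd
    have he : Bdᴴ * B * Bd = Bd := by
      rw [conjTranspose_eq_transpose_of_trivial, hBdsym, hB2]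
    rwa [he] at h
  obtain ⟨S, hSpsd, hSsym, hSS⟩ :
      ∃ S : Matrix (Fin p) (Fin p) ℝ, S.PosSemidef ∧ Sᴴ = S ∧ S * S = Bd :=
    by open scoped MatrixOrder Matrix.Norms.L2Operator in exact ⟨CFC.sqrt Bd, (CFC.sqrt_nonneg Bd).posSemidef,
      (CFC.sqrt_nonneg Bd).posSemidef.1, CFC.sqrt_mul_sqrt_self Bd hBdPSD.nonneg⟩
  set M := S * A * S with hMdef
  have hMpsd : M.PosSemidef := by
    have := hA.conjTranspose_mul_mul_same S
    rwa [hSsym] at this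
  have hMh : M.IsHermitian := hMpsd.1
  have htr : (Bd * A).trace = M.trace := by
    rw [← hSS, hMdef, Matrix.trace_mul_cycle S A S]
  set Q := S * B * S with hQdef
  have hQsym : Qᴴ = Q := by
    have hBh : Bᴴ = B := hB.1
    rw [hQdef, conjTranspose_mul, conjTranspose_mul, hSsym, hBh]
    simp only [mul_assoc]
  have hQ2 : Q * Q = Q := by
    have he : S * B * S * (S * B * S) = S * (B * Bd * B) * S := by
      rw [← hSS]; simp only [mul_assoc]
    rw [hQdef, he, hB1]
  have h1Q : ((1 : Matrix (Fin p) (Fin p) ℝ) - Q).PosSemidef := by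
    have h1 := posSemidef_conjTranspose_mul_self ((1 : Matrix (Fin p) (Fin p) ℝ) - Q)
    have h2 : ((1 : Matrix (Fin p) (Fin p) ℝ) - Q)ᴴ * (1 - Q) = 1 - Q := by
      rw [conjTranspose_sub, conjTranspose_one, hQsym]
      simp [sub_mul, mul_sub, hQ2]
    rwa [h2] at h1
  have hQM : (Q - M).PosSemidef := by
    have h := hBA.conjTranspose_mul_mul_same S
    rwa [hSsym, mul_sub, sub_mul] at h
  have h1M : ((1 : Matrix (Fin p) (Fin p) ℝ) - M).PosSemidef := by
    have := h1Q.add hQM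
    rwa [sub_add_sub_cancel] at this
  -- eigenvalues of M are in [0,1]
  have hev_nonneg : ∀ i, 0 ≤ hMh.eigenvalues i := hMpsd.eigenvalues_nonneg
  have hev_le_one : ∀ i, hMh.eigenvalues i ≤ 1 := by
    intro i
    by_cases h0 : hMh.eigenvalues i = 0
    · rw [h0]; norm_num
    · set v : Fin p → ℝ := ⇑(hMh.eigenvectorBasis i) with hvdef
      have hv : M *ᵥ v = hMh.eigenvalues i • v := hMh.mulVec_eigenvectorBasis i
      have hray : hMh.eigenvalues i = star v ⬝ᵥ (M *ᵥ v) := by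
        have := hMh.eigenvalues_eq i
        simpa using this
      have hvv : v ⬝ᵥ v = 1 := by
        rw [hv, dotProduct_smul, star_trivial, smul_eq_mul] at hray
        field_simp at hray
        nlinarith [hray]
      have hpos := h1M.dotProduct_mulVec_nonneg v
      rw [sub_mulVec, one_mulVec, dotProduct_sub, hv, dotProduct_smul, star_trivial,
        smul_eq_mul, hvv, mul_one] at hpos
      linarith
  have htrM : M.trace = ∑ i, hMh.eigenvalues i := by
    conv_lhs => rw [hMh.spectral_theorem]
    rw [Unitary.conjStarAlgAut_apply, Matrix.trace_mul_cycle, Unitary.coe_star_mul_self, one_mul, trace_diagonal]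
    simp [Function.comp]
  have hrank : M.rank = Fintype.card {i // hMh.eigenvalues i ≠ 0} :=
    hMh.rank_eq_card_non_zero_eigs
  have hMrankA : M.rank ≤ A.rank :=
    le_trans (rank_mul_le_left (S * A) S) (rank_mul_le_right S A)
  calc (Bd * A).trace = ∑ i, hMh.eigenvalues i := by rw [htr, htrM]
    _ ≤ ∑ i : Fin p, (if hMh.eigenvalues i ≠ 0 then (1 : ℝ) else 0) := by
        refine Finset.sum_le_sum fun i _ => ?_
        by_cases h0 : hMh.eigenvalues i = 0
        · simp [h0]
        · simp [h0, hev_le_one i]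
    _ = ((Finset.univ.filter fun i => hMh.eigenvalues i ≠ 0).card : ℝ) := by
        rw [Finset.sum_boole]
    _ = (M.rank : ℝ) := by rw [hrank, Fintype.card_subtype]
    _ ≤ (A.rank : ℝ) := Nat.cast_le.2 hMrankA
end
end

section
/- Let K ≥ 1, N ≥ 1 and let h_{k,i} ∈ ℝ^p for k = 1,…,K and i = 1,…,N be feature vectors. Then Tr[Σ_T† Σ_B] ≤ rank(Σ_B). Moreover, if the configuration is fully collapsed, i.e., h_{k,i} = μ_k for all k and i (equivalently Σ_W = 0), then Tr[Σ_T† Σ_B] = rank(Σ_B). -/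
open Matrix Finset

noncomputable section

/-! ### Auxiliary lemmas -/

/-- Uniqueness of the Moore–Penrose pseudoinverse. -/
lemma aux_mp_unique {p : ℕ} {A X Y : Matrix (Fin p) (Fin p) ℝ}
    (hX : A * X * A = A ∧ X * A * X = X ∧ (A * X)ᵀ = A * X ∧ (X * A)ᵀ = X * A)
    (hY : A * Y * A = A ∧ Y * A * Y = Y ∧ (A * Y)ᵀ = A * Y ∧ (Y * A)ᵀ = Y * A) : X = Y := by
  obtain ⟨x1, x2, x3, x4⟩ := hX
  obtain ⟨y1, y2, y3, y4⟩ := hY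
  have hAX : A * X = A * Y := by
    calc A * X = (A * Y * A) * X := by rw [y1]
    _ = (A * Y) * (A * X) := by simp only [mul_assoc]
    _ = (A * Y)ᵀ * (A * X)ᵀ := by rw [y3, x3]
    _ = ((A * X) * (A * Y))ᵀ := (transpose_mul _ _).symm
    _ = ((A * X * A) * Y)ᵀ := by simp only [mul_assoc]
    _ = (A * Y)ᵀ := by rw [x1]
    _ = A * Y := y3
  have hXA : X * A = Y * A := by
    calc X * A = X * (A * Y * A) := by rw [y1]
    _ = (X * A) * (Y * A) := by simp only [mul_assoc]
    _ = (X * A)ᵀ * (Y * A)ᵀ := by rw [x4, y4]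
    _ = ((Y * A) * (X * A))ᵀ := (transpose_mul _ _).symm
    _ = (Y * (A * X * A))ᵀ := by simp only [mul_assoc]
    _ = (Y * A)ᵀ := by rw [x1]
    _ = Y * A := y4
  calc X = X * A * X := x2.symm
  _ = X * (A * Y) := by rw [mul_assoc, hAX]
  _ = (X * A) * Y := by rw [mul_assoc]
  _ = Y * A * Y := by rw [hXA]
  _ = Y := y2

/-- The Moore–Penrose pseudoinverse of a symmetric matrix is symmetric. -/
lemma aux_mp_transpose {p : ℕ} {A Ad : Matrix (Fin p) (Fin p) ℝ} (hA : Aᵀ = A)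
    (h : A * Ad * A = A ∧ Ad * A * Ad = Ad ∧ (A * Ad)ᵀ = A * Ad ∧ (Ad * A)ᵀ = Ad * A) :
    Adᵀ = Ad := by
  obtain ⟨h1, h2, h3, h4⟩ := h
  apply aux_mp_unique ?_ ⟨h1, h2, h3, h4⟩
  refine ⟨?_, ?_, ?_, ?_⟩
  · have := congrArg Matrix.transpose h1
    simp only [transpose_mul, hA] at this
    rw [mul_assoc]; exact this
  · have := congrArg Matrix.transpose h2
    simp only [transpose_mul, hA] at this
    rw [mul_assoc]; exact this
  · have e : A * Adᵀ = Ad * A := by rw [← h4, transpose_mul, hA]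
    rw [e]; exact h4
  · have e : Adᵀ * A = A * Ad := by rw [← h3, transpose_mul, hA]
    rw [e]; exact h3

lemma aux_sum_mulVec {p : ℕ} {ι : Type*} (s : Finset ι) (M : ι → Matrix (Fin p) (Fin p) ℝ)
    (x : Fin p → ℝ) : (∑ k ∈ s, M k) *ᵥ x = ∑ k ∈ s, M k *ᵥ x := by
  ext i
  simp only [mulVec, dotProduct, Matrix.sum_apply, Finset.sum_apply, Finset.sum_mul]
  exact Finset.sum_comm

lemma aux_dotProduct_sum {p : ℕ} {ι : Type*} (s : Finset ι) (x : Fin p → ℝ)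
    (y : ι → Fin p → ℝ) : x ⬝ᵥ (∑ k ∈ s, y k) = ∑ k ∈ s, x ⬝ᵥ y k := by
  simp only [dotProduct, Finset.sum_apply, Finset.mul_sum]
  exact Finset.sum_comm

lemma aux_vmv_mulVec {p : ℕ} (v x : Fin p → ℝ) :
    (vecMulVec v v) *ᵥ x = (v ⬝ᵥ x) • v := by
  ext i
  simp only [mulVec, dotProduct, vecMulVec_apply, Pi.smul_apply, smul_eq_mul, Finset.sum_mul,
    Finset.mul_sum]
  rw [Finset.sum_congr rfl]
  intro j _
  ring

lemma aux_quad_smul_sum {p : ℕ} {ι : Type*} [Fintype ι] (c : ℝ) (f : ι → Fin p → ℝ)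
    (x : Fin p → ℝ) :
    x ⬝ᵥ ((c • ∑ k, vecMulVec (f k) (f k)) *ᵥ x) = c * ∑ k, (f k ⬝ᵥ x) ^ 2 := by
  rw [smul_mulVec, dotProduct_smul, smul_eq_mul, aux_sum_mulVec, aux_dotProduct_sum]
  congr 1
  apply Finset.sum_congr rfl
  intro k _
  rw [aux_vmv_mulVec, dotProduct_smul, smul_eq_mul, dotProduct_comm]
  ring

lemma aux_herm_smul_sum {p : ℕ} {ι : Type*} [Fintype ι] (c : ℝ) (f : ι → Fin p → ℝ) :
    (c • ∑ k, vecMulVec (f k) (f k)).IsHermitian := by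
  unfold Matrix.IsHermitian
  ext i j
  simp only [conjTranspose_apply, Matrix.smul_apply, Matrix.sum_apply, vecMulVec_apply,
    smul_eq_mul, star_trivial]
  congr 1
  apply Finset.sum_congr rfl
  intro k _
  ring

lemma aux_psd_smul_sum {p : ℕ} {ι : Type*} [Fintype ι] {c : ℝ} (hc : 0 ≤ c)
    (f : ι → Fin p → ℝ) : (c • ∑ k, vecMulVec (f k) (f k)).PosSemidef := by
  refine Matrix.PosSemidef.of_dotProduct_mulVec_nonneg (aux_herm_smul_sum c f) fun x => ?_
  have hs : star x = x := by funext i; simp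
  rw [hs, aux_quad_smul_sum]
  positivity

lemma aux_psd_double {K N p : ℕ} {c : ℝ} (hc : 0 ≤ c) (g : Fin K → Fin N → Fin p → ℝ) :
    (c • ∑ k, ∑ i, vecMulVec (g k i) (g k i)).PosSemidef := by
  have h : ∑ k, ∑ i, vecMulVec (g k i) (g k i)
      = ∑ q : Fin K × Fin N, vecMulVec (g q.1 q.2) (g q.1 q.2) := by
    rw [Fintype.sum_prod_type]
  rw [h]
  exact aux_psd_smul_sum hc _

lemma aux_quad_nonneg {p : ℕ} {M : Matrix (Fin p) (Fin p) ℝ} (h : M.PosSemidef)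
    (x : Fin p → ℝ) : 0 ≤ x ⬝ᵥ (M *ᵥ x) := by
  have := h.dotProduct_mulVec_nonneg x
  simpa using this

lemma aux_sum_shift {N : ℕ} (x y : Fin N → ℝ) (c d : ℝ) :
    ∑ i, (x i - c) * (y i - d)
      = (∑ i, x i * y i) - d * (∑ i, x i) - c * (∑ i, y i) + N * (c * d) := by
  have h : ∀ i, (x i - c) * (y i - d) = x i * y i - d * x i - c * y i + c * d := by
    intro i; ring
  simp only [h, Finset.sum_add_distrib, Finset.sum_sub_distrib, ← Finset.mul_sum,
    Finset.sum_const, card_univ, Fintype.card_fin, nsmul_eq_mul]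
  ring

/-- The covariance decomposition `Σ_T = Σ_W + Σ_B`. -/
lemma aux_sigmaT_eq {K N p : ℕ} (hN : 1 ≤ N) (H : Fin K → Fin N → (Fin p → ℝ)) :
    SigmaT H = SigmaW H + SigmaB H := by
  have hN0 : (N : ℝ) ≠ 0 := by positivity
  ext a b
  have hcm : ∀ (k : Fin K) (a : Fin p), ∑ i, H k i a = (N : ℝ) * classMean H k a := by
    intro k a
    simp only [classMean, Pi.smul_apply, Finset.sum_apply, smul_eq_mul]
    field_simp
  have key : ∀ k : Fin K,
      ∑ i, (H k i a - globalMean H a) * (H k i b - globalMean H b)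
        = (∑ i, (H k i a - classMean H k a) * (H k i b - classMean H k b))
          + (N : ℝ) * ((classMean H k a - globalMean H a) * (classMean H k b - globalMean H b)) := by
    intro k
    rw [aux_sum_shift, aux_sum_shift, hcm k a, hcm k b]
    ring
  simp only [SigmaT, SigmaW, SigmaB, Matrix.add_apply, Matrix.smul_apply, Matrix.sum_apply,
    vecMulVec_apply, Pi.sub_apply, smul_eq_mul]
  rw [Finset.sum_congr rfl (fun k _ => key k), Finset.sum_add_distrib, mul_add]
  congr 1
  rw [← Finset.mul_sum, ← mul_assoc, mul_inv]
  rw [mul_assoc ((K:ℝ))⁻¹, inv_mul_cancel₀ hN0, mul_one]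

/-- In the collapsed case `Σ_T = Σ_B`. -/
lemma aux_sigmaT_collapsed {K N p : ℕ} (hN : 1 ≤ N) (H : Fin K → Fin N → (Fin p → ℝ))
    (hcol : ∀ k i, H k i = classMean H k) : SigmaT H = SigmaB H := by
  have hN0 : (N : ℝ) ≠ 0 := by positivity
  unfold SigmaT SigmaB
  have h : ∀ k : Fin K, ∑ i : Fin N, vecMulVec (H k i - globalMean H) (H k i - globalMean H)
      = (N : ℝ) • vecMulVec (classMean H k - globalMean H) (classMean H k - globalMean H) := by
    intro k
    rw [Finset.sum_congr rfl (fun i _ => by rw [hcol k i])]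
    rw [Finset.sum_const, card_univ, Fintype.card_fin, ← Nat.cast_smul_eq_nsmul ℝ]
  rw [Finset.sum_congr rfl (fun k _ => h k), ← Finset.smul_sum, smul_smul, mul_inv]
  rw [mul_assoc ((K:ℝ))⁻¹, inv_mul_cancel₀ hN0, mul_one]

lemma aux_mulVec_dot {p : ℕ} (A : Matrix (Fin p) (Fin p) ℝ) (u z : Fin p → ℝ) :
    (A *ᵥ u) ⬝ᵥ z = u ⬝ᵥ (Aᵀ *ᵥ z) := by
  rw [dotProduct_mulVec, vecMul_transpose]

lemma aux_basis_self_dot {p : ℕ} {B : Matrix (Fin p) (Fin p) ℝ} (hB : B.IsHermitian)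
    (j : Fin p) :
    (⇑(hB.eigenvectorBasis j) : Fin p → ℝ) ⬝ᵥ ⇑(hB.eigenvectorBasis j) = 1 := by
  have h1 : ‖hB.eigenvectorBasis j‖ = 1 := hB.eigenvectorBasis.orthonormal.1 j
  have h2 : (inner ℝ (hB.eigenvectorBasis j) (hB.eigenvectorBasis j) : ℝ) = 1 := by
    rw [real_inner_self_eq_norm_mul_norm, h1, mul_one]
  rw [← h2, PiLp.inner_apply]
  simp [dotProduct, RCLike.inner_apply, mul_comm, pow_two]

/-- Trace of `S * B` against the eigendecomposition of the hermitian matrix `B`. -/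
lemma aux_trace_mul_herm {p : ℕ} (S B : Matrix (Fin p) (Fin p) ℝ) (hB : B.IsHermitian) :
    (S * B).trace = ∑ j, hB.eigenvalues j *
      ((hB.eigenvectorBasis j : Fin p → ℝ) ⬝ᵥ (S *ᵥ ⇑(hB.eigenvectorBasis j))) := by
  set U : Matrix (Fin p) (Fin p) ℝ := (hB.eigenvectorUnitary : Matrix (Fin p) (Fin p) ℝ) with hU
  have hspec := hB.spectral_theorem
  have h1 : (S * B).trace = ((star U * S * U) * diagonal (RCLike.ofReal ∘ hB.eigenvalues)).trace := by
    conv_lhs => rw [hspec, Unitary.conjStarAlgAut_apply, ← hU]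
    rw [show S * (U * diagonal (RCLike.ofReal ∘ hB.eigenvalues) * star U)
        = (S * U * diagonal (RCLike.ofReal ∘ hB.eigenvalues)) * star U by simp only [mul_assoc],
      trace_mul_comm]
    simp only [mul_assoc]
  rw [h1, trace]
  congr 1
  ext j
  simp only [diag_apply, mul_diagonal, Function.comp_apply, RCLike.ofReal_real_eq_id, id_eq]
  rw [mul_comm]
  congr 1
  simp only [mul_apply, dotProduct, mulVec, dotProduct, star_apply, Matrix.star_apply,
    star_trivial, Finset.sum_mul, Finset.mul_sum]
  rw [Finset.sum_comm]
  apply Finset.sum_congr rfl; intro a _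
  apply Finset.sum_congr rfl; intro b _
  simp only [U, IsHermitian.eigenvectorUnitary_apply]
  ring

/-- The key per-eigenvector inequality. -/
lemma aux_term_le {p : ℕ} {T STd B : Matrix (Fin p) (Fin p) ℝ}
    (hSsym : STdᵀ = STd) (h2 : STd * T * STd = STd)
    (hT : ∀ x, 0 ≤ x ⬝ᵥ (T *ᵥ x))
    (hBle : ∀ x, x ⬝ᵥ (B *ᵥ x) ≤ x ⬝ᵥ (T *ᵥ x))
    (hBpsd : ∀ x, 0 ≤ x ⬝ᵥ (B *ᵥ x))
    (hBsym : Bᵀ = B)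
    {v : Fin p → ℝ} (hv : v ⬝ᵥ v = 1) {lam : ℝ} (hlam : 0 < lam)
    (heig : B *ᵥ v = lam • v) :
    lam * (v ⬝ᵥ (STd *ᵥ v)) ≤ 1 := by
  set x := STd *ᵥ v with hx
  set t := v ⬝ᵥ x with ht
  have hA : x ⬝ᵥ (T *ᵥ x) = t := by
    rw [hx, aux_mulVec_dot, hSsym, mulVec_mulVec, mulVec_mulVec, h2]
  have htnn : 0 ≤ t := hA ▸ hT x
  have hvBx : v ⬝ᵥ (B *ᵥ x) = lam * t := by
    have h5 : v ⬝ᵥ (B *ᵥ x) = (B *ᵥ v) ⬝ᵥ x := by rw [aux_mulVec_dot, hBsym]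
    rw [h5, heig, smul_dotProduct, smul_eq_mul, ht]
  have hxBv : x ⬝ᵥ (B *ᵥ v) = lam * t := by
    rw [heig, dotProduct_smul, smul_eq_mul, dotProduct_comm, ← ht]
  have hvBv : v ⬝ᵥ (B *ᵥ v) = lam := by
    rw [heig, dotProduct_smul, smul_eq_mul, hv, mul_one]
  have hexp : 0 ≤ x ⬝ᵥ (B *ᵥ x) - lam * t ^ 2 := by
    have h0 := hBpsd (x - t • v)
    have hE : (x - t • v) ⬝ᵥ (B *ᵥ (x - t • v))
        = x ⬝ᵥ (B *ᵥ x) - t * (v ⬝ᵥ (B *ᵥ x)) - t * (x ⬝ᵥ (B *ᵥ v))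
          + t * t * (v ⬝ᵥ (B *ᵥ v)) := by
      simp only [mulVec_sub, mulVec_smul, sub_dotProduct, dotProduct_sub,
        smul_dotProduct, dotProduct_smul, smul_eq_mul]
      ring
    rw [hE, hvBx, hxBv, hvBv] at h0
    nlinarith [h0]
  have hle2 : lam * t ^ 2 ≤ t := by
    have h6 := hBle x
    rw [hA] at h6
    linarith [hexp]
  nlinarith [hle2, htnn, hlam]

/-- The key per-eigenvector equality in the collapsed case. -/
lemma aux_term_eq {p : ℕ} {B STd : Matrix (Fin p) (Fin p) ℝ}
    (hBsym : Bᵀ = B) (h1 : B * STd * B = B)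
    {v : Fin p → ℝ} (hv : v ⬝ᵥ v = 1) {lam : ℝ} (hlam : lam ≠ 0)
    (heig : B *ᵥ v = lam • v) :
    lam * (v ⬝ᵥ (STd *ᵥ v)) = 1 := by
  have key : v ⬝ᵥ ((B * STd * B) *ᵥ v) = lam * (lam * (v ⬝ᵥ (STd *ᵥ v))) := by
    rw [← mulVec_mulVec, ← mulVec_mulVec, heig, mulVec_smul, mulVec_smul, dotProduct_smul,
      smul_eq_mul]
    congr 1
    have h5 : v ⬝ᵥ (B *ᵥ (STd *ᵥ v)) = (B *ᵥ v) ⬝ᵥ (STd *ᵥ v) := by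
      rw [aux_mulVec_dot, hBsym]
    rw [h5, heig, smul_dotProduct, smul_eq_mul]
  have key2 : v ⬝ᵥ ((B * STd * B) *ᵥ v) = lam := by
    rw [h1, heig, dotProduct_smul, smul_eq_mul, hv, mul_one]
  have h6 : lam * (lam * (v ⬝ᵥ (STd *ᵥ v))) = lam * 1 := by
    rw [← key, key2, mul_one]
  exact mul_left_cancel₀ hlam h6

/-- **Theorem 2.** `Tr[Σ_T† Σ_B] ≤ rank(Σ_B)`, with equality for fully collapsed
configurations (`h_{k,i} = μ_k` for all `k, i`). -/
theorem trace_sigmaT_pinv_mul_sigmaB_le_rank {K N p : ℕ} (hK : 1 ≤ K) (hN : 1 ≤ N)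
    (H : Fin K → Fin N → (Fin p → ℝ))
    (STd : Matrix (Fin p) (Fin p) ℝ) (hSTd : IsMoorePenrose (SigmaT H) STd) :
    (STd * SigmaB H).trace ≤ ((SigmaB H).rank : ℝ) ∧
    ((∀ k i, H k i = classMean H k) → (STd * SigmaB H).trace = ((SigmaB H).rank : ℝ)) := by
  have hpsdB : (SigmaB H).PosSemidef := by
    unfold SigmaB
    exact aux_psd_smul_sum (by positivity) _
  have hpsdW : (SigmaW H).PosSemidef := by
    unfold SigmaW
    exact aux_psd_double (by positivity) _
  have hpsdT : (SigmaT H).PosSemidef := by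
    unfold SigmaT
    exact aux_psd_double (by positivity) _
  have hBherm : (SigmaB H).IsHermitian := hpsdB.1
  have hBsym : (SigmaB H)ᵀ = SigmaB H := by
    rw [← conjTranspose_eq_transpose_of_trivial]; exact hBherm
  have hTsym : (SigmaT H)ᵀ = SigmaT H := by
    rw [← conjTranspose_eq_transpose_of_trivial]; exact hpsdT.1
  obtain ⟨m1, m2, m3, m4⟩ := hSTd
  have hSsym : STdᵀ = STd := aux_mp_transpose hTsym ⟨m1, m2, m3, m4⟩
  have hle : ∀ x, x ⬝ᵥ (SigmaB H *ᵥ x) ≤ x ⬝ᵥ (SigmaT H *ᵥ x) := by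
    intro x
    rw [aux_sigmaT_eq hN H, add_mulVec, dotProduct_add]
    have := aux_quad_nonneg hpsdW x
    linarith
  have htr := aux_trace_mul_herm STd (SigmaB H) hBherm
  have hrank : ((SigmaB H).rank : ℝ)
      = ∑ j, if hBherm.eigenvalues j ≠ 0 then (1 : ℝ) else 0 := by
    rw [hBherm.rank_eq_card_non_zero_eigs, Fintype.card_subtype, ← Finset.sum_boole]
  constructor
  · rw [htr, hrank]
    apply Finset.sum_le_sum
    intro j _
    by_cases hj : hBherm.eigenvalues j = 0
    · simp [hj]
    · rw [if_pos hj]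
      have hpos : 0 < hBherm.eigenvalues j :=
        lt_of_le_of_ne (hpsdB.eigenvalues_nonneg j) (Ne.symm hj)
      exact aux_term_le hSsym m2 (aux_quad_nonneg hpsdT) hle (aux_quad_nonneg hpsdB) hBsym
        (aux_basis_self_dot hBherm j) hpos (hBherm.mulVec_eigenvectorBasis j)
  · intro hcol
    have hTB : SigmaT H = SigmaB H := aux_sigmaT_collapsed hN H hcol
    rw [hTB] at m1
    rw [htr, hrank]
    apply Finset.sum_congr rfl
    intro j _
    by_cases hj : hBherm.eigenvalues j = 0
    · simp [hj]
    · rw [if_pos hj]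
      exact aux_term_eq hBsym m1 (aux_basis_self_dot hBherm j) hj
        (hBherm.mulVec_eigenvectorBasis j)
end
end

section
/- Let Σ_B and Σ_W be real symmetric positive semidefinite p×p matrices, let V ⊆ ℝ^p be the column space of Σ_B, and let U ∈ ℝ^{p×p} be an invertible matrix that maps V into V and maps the orthogonal complement V^⊥ into V^⊥. Then Tr[(U Σ_B U^T)† (U Σ_W U^T)] = Tr[Σ_B† Σ_W]. -/
open Matrix

noncomputable section

lemma ext_of_mulVec' {p : ℕ} {A B : Matrix (Fin p) (Fin p) ℝ}
    (h : ∀ x, A *ᵥ x = B *ᵥ x) : A = B := by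
  ext i j
  have := congrFun (h (Pi.single j 1)) i
  simpa using this

lemma eq_zero_of_dot' {p : ℕ} {A : Matrix (Fin p) (Fin p) ℝ}
    (h : ∀ x y : Fin p → ℝ, y ⬝ᵥ A *ᵥ x = 0) : A = 0 := by
  ext i j
  have := h (Pi.single j 1) (Pi.single i 1)
  simpa using this

lemma mp_unique' {p : ℕ} {A B C : Matrix (Fin p) (Fin p) ℝ}
    (hB : IsMoorePenrose A B) (hC : IsMoorePenrose A C) : B = C := by
  obtain ⟨hB1, hB2, hB3, hB4⟩ := hB
  obtain ⟨hC1, hC2, hC3, hC4⟩ := hC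
  have hAB : A * B = A * C := by
    calc A * B = (A * C * A) * B := by rw [hC1]
    _ = (A * C) * (A * B) := by noncomm_ring
    _ = (A * C)ᵀ * (A * B)ᵀ := by rw [hC3, hB3]
    _ = Cᵀ * (A * B * A)ᵀ := by simp [Matrix.transpose_mul, Matrix.mul_assoc]
    _ = Cᵀ * Aᵀ := by rw [hB1]
    _ = (A * C)ᵀ := by rw [Matrix.transpose_mul]
    _ = A * C := hC3
  have hBA : B * A = C * A := by
    calc B * A = B * (A * C * A) := by rw [hC1]
    _ = (B * A) * (C * A) := by noncomm_ring
    _ = (B * A)ᵀ * (C * A)ᵀ := by rw [hC4, hB4]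
    _ = (A * B * A)ᵀ * Cᵀ := by simp [Matrix.transpose_mul, Matrix.mul_assoc]
    _ = Aᵀ * Cᵀ := by rw [hB1]
    _ = (C * A)ᵀ := by rw [Matrix.transpose_mul]
    _ = C * A := hC4
  calc B = B * A * B := hB2.symm
  _ = B * (A * C) := by rw [Matrix.mul_assoc, hAB]
  _ = (B * A) * C := by rw [Matrix.mul_assoc]
  _ = C * A * C := by rw [hBA]
  _ = C := hC2

/-- **Observation (partial invariance of Fuzziness).** Let `Σ_B`, `Σ_W` be symmetric PSD,
let `V` be the column space of `Σ_B`, and let `U` be invertible sending `V` into `V` and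
`V^⊥` into `V^⊥`. Then `Tr[(U Σ_B Uᵀ)† (U Σ_W Uᵀ)] = Tr[Σ_B† Σ_W]`. -/
theorem fuzziness_invariant_of_preserving {p : ℕ}
    (SB SW : Matrix (Fin p) (Fin p) ℝ) (hSB : SB.PosSemidef) (hSW : SW.PosSemidef)
    (U : Matrix (Fin p) (Fin p) ℝ) (hU : IsUnit U.det)
    (hUV : ∀ v ∈ LinearMap.range SB.mulVecLin, U.mulVec v ∈ LinearMap.range SB.mulVecLin)
    (hUVperp : ∀ w : Fin p → ℝ, (∀ v ∈ LinearMap.range SB.mulVecLin, v ⬝ᵥ w = 0) →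
      ∀ v ∈ LinearMap.range SB.mulVecLin, v ⬝ᵥ U.mulVec w = 0)
    (SBd M : Matrix (Fin p) (Fin p) ℝ)
    (hSBd : IsMoorePenrose SB SBd) (hM : IsMoorePenrose (U * SB * Uᵀ) M) :
    (M * (U * SW * Uᵀ)).trace = (SBd * SW).trace := by
  obtain ⟨h1, h2, h3, h4⟩ := hSBd
  -- symmetry of SB
  have hSBt : SBᵀ = SB := by
    have := hSB.1
    simpa [Matrix.IsHermitian] using this
  -- symmetry of SBd
  have hSBdt : SBdᵀ = SBd := by
    refine mp_unique' (A := SB) ?_ ⟨h1, h2, h3, h4⟩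
    refine ⟨?_, ?_, ?_, ?_⟩
    · have h := congrArg Matrix.transpose h1
      simp only [Matrix.transpose_mul, hSBt] at h
      rw [Matrix.mul_assoc]; exact h
    · have h := congrArg Matrix.transpose h2
      simp only [Matrix.transpose_mul, hSBt] at h
      rw [Matrix.mul_assoc]; exact h
    · calc (SB * SBdᵀ)ᵀ = SBdᵀᵀ * SBᵀ := by rw [Matrix.transpose_mul]
      _ = SBd * SB := by rw [Matrix.transpose_transpose, hSBt]
      _ = (SBd * SB)ᵀ := h4.symm
      _ = SBᵀ * SBdᵀ := by rw [Matrix.transpose_mul]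
      _ = SB * SBdᵀ := by rw [hSBt]
    · calc (SBdᵀ * SB)ᵀ = SBᵀ * SBdᵀᵀ := by rw [Matrix.transpose_mul]
      _ = SB * SBd := by rw [Matrix.transpose_transpose, hSBt]
      _ = (SB * SBd)ᵀ := h3.symm
      _ = SBdᵀ * SBᵀ := by rw [Matrix.transpose_mul]
      _ = SBdᵀ * SB := by rw [hSBt]
  set P := SB * SBd with hPdef
  have hPt : Pᵀ = P := h3
  have hP' : SBd * SB = P := by
    calc SBd * SB = (SBd * SB)ᵀ := h4.symm
    _ = SBᵀ * SBdᵀ := by rw [Matrix.transpose_mul]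
    _ = P := by rw [hSBt, hSBdt]
  have hPSB : P * SB = SB := h1
  have hPSBd : P * SBd = SBd := by rw [← hP', h2]
  -- range facts
  have hmem : ∀ x, P *ᵥ x ∈ LinearMap.range SB.mulVecLin := by
    intro x
    exact ⟨SBd *ᵥ x, by simp [Matrix.mulVecLin_apply, Matrix.mulVec_mulVec]; rfl⟩
  have hfix : ∀ v ∈ LinearMap.range SB.mulVecLin, P *ᵥ v = v := by
    rintro v ⟨y, rfl⟩
    simp only [Matrix.mulVecLin_apply, Matrix.mulVec_mulVec, hPSB]
  -- P commutes with U
  have hPUP : P * (U * P) = U * P := by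
    apply ext_of_mulVec'
    intro x
    have h := hfix _ (hUV _ (hmem x))
    simpa [← Matrix.mulVec_mulVec] using h
  have hperp : ∀ x, ∀ v ∈ LinearMap.range SB.mulVecLin, v ⬝ᵥ ((1 - P) *ᵥ x) = 0 := by
    intro x v hv
    have hPv := hfix v hv
    have : v ⬝ᵥ (P *ᵥ x) = v ⬝ᵥ x := by
      rw [Matrix.dotProduct_mulVec, ← hPt, Matrix.vecMul_transpose, hPv]
    simp [Matrix.sub_mulVec, dotProduct_sub, this]
  have hvm : ∀ z : Fin p → ℝ, z ᵥ* P = P *ᵥ z := by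
    intro z
    conv_lhs => rw [← hPt]
    rw [Matrix.vecMul_transpose]
  have hPU0 : P * (U * (1 - P)) = 0 := by
    apply eq_zero_of_dot'
    intro x y
    have e1 : (P * (U * (1 - P))) *ᵥ x = P *ᵥ (U *ᵥ ((1 - P) *ᵥ x)) :=
      calc (P * (U * (1 - P))) *ᵥ x
          = P *ᵥ ((U * (1 - P)) *ᵥ x) := (Matrix.mulVec_mulVec x P (U * (1 - P))).symm
      _ = P *ᵥ (U *ᵥ ((1 - P) *ᵥ x)) := by rw [Matrix.mulVec_mulVec x U (1 - P)]
    rw [e1, Matrix.dotProduct_mulVec, hvm]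
    exact hUVperp _ (hperp _) _ (hmem _)
  have hcomm : P * U = U * P := by
    have expand : P * U = P * (U * P) + P * (U * (1 - P)) := by noncomm_ring
    rw [expand, hPUP, hPU0, add_zero]
  -- transpose / inverse commutation
  have hcommT : P * Uᵀ = Uᵀ * P := by
    have := congrArg Matrix.transpose hcomm
    simp only [Matrix.transpose_mul, hPt] at this
    exact this.symm
  have hUinv : U * U⁻¹ = 1 := Matrix.mul_nonsing_inv U hU
  have hUinv' : U⁻¹ * U = 1 := Matrix.nonsing_inv_mul U hU
  have hcommInv : P * U⁻¹ = U⁻¹ * P := by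
    calc P * U⁻¹ = U⁻¹ * U * (P * U⁻¹) := by rw [hUinv', Matrix.one_mul]
    _ = U⁻¹ * (U * P) * U⁻¹ := by noncomm_ring
    _ = U⁻¹ * (P * U) * U⁻¹ := by rw [hcomm]
    _ = U⁻¹ * P * (U * U⁻¹) := by noncomm_ring
    _ = U⁻¹ * P := by rw [hUinv, Matrix.mul_one]
  have hcommInvT : P * U⁻¹ᵀ = U⁻¹ᵀ * P := by
    have := congrArg Matrix.transpose hcommInv
    simp only [Matrix.transpose_mul, hPt] at this
    exact this.symm
  have hUTinv : Uᵀ * U⁻¹ᵀ = 1 := by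
    rw [← Matrix.transpose_mul, hUinv']; exact Matrix.transpose_one
  have hUTinv' : U⁻¹ᵀ * Uᵀ = 1 := by
    rw [← Matrix.transpose_mul, hUinv]; exact Matrix.transpose_one
  -- the candidate pseudoinverse
  set N := U⁻¹ᵀ * SBd * U⁻¹ with hNdef
  set A := U * SB * Uᵀ with hAdef
  have hAN : A * N = P := by
    calc A * N = U * SB * (Uᵀ * U⁻¹ᵀ) * SBd * U⁻¹ := by rw [hAdef, hNdef]; noncomm_ring
    _ = U * (SB * SBd) * U⁻¹ := by rw [hUTinv]; noncomm_ring
    _ = P * U * U⁻¹ := by rw [← hPdef, hcomm]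
    _ = P := by rw [Matrix.mul_assoc, hUinv, Matrix.mul_one]
  have hNA : N * A = P := by
    calc N * A = U⁻¹ᵀ * SBd * (U⁻¹ * U) * SB * Uᵀ := by rw [hAdef, hNdef]; noncomm_ring
    _ = U⁻¹ᵀ * (SBd * SB) * Uᵀ := by rw [hUinv']; noncomm_ring
    _ = U⁻¹ᵀ * (P * Uᵀ) := by rw [hP', Matrix.mul_assoc]
    _ = U⁻¹ᵀ * Uᵀ * P := by rw [hcommT]; noncomm_ring
    _ = P := by rw [hUTinv', Matrix.one_mul]
  have hNMP : IsMoorePenrose A N := by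
    refine ⟨?_, ?_, ?_, ?_⟩
    · calc A * N * A = P * (U * SB * Uᵀ) := by rw [hAN, hAdef]
      _ = P * U * SB * Uᵀ := by noncomm_ring
      _ = U * (P * SB) * Uᵀ := by rw [hcomm]; noncomm_ring
      _ = A := by rw [hPSB, hAdef]
    · calc N * A * N = P * (U⁻¹ᵀ * SBd * U⁻¹) := by rw [hNA, hNdef]
      _ = P * U⁻¹ᵀ * SBd * U⁻¹ := by noncomm_ring
      _ = U⁻¹ᵀ * (P * SBd) * U⁻¹ := by rw [hcommInvT]; noncomm_ring
      _ = N := by rw [hPSBd, hNdef]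
    · rw [hAN]; exact hPt
    · rw [hNA]; exact hPt
  have hMN : M = N := mp_unique' hM hNMP
  -- trace computation
  rw [hMN, hNdef]
  have hNeq : U⁻¹ᵀ * SBd * U⁻¹ * (U * SW * Uᵀ) = U⁻¹ᵀ * (SBd * SW * Uᵀ) := by
    calc U⁻¹ᵀ * SBd * U⁻¹ * (U * SW * Uᵀ)
        = U⁻¹ᵀ * SBd * (U⁻¹ * U) * SW * Uᵀ := by noncomm_ring
    _ = U⁻¹ᵀ * (SBd * SW * Uᵀ) := by rw [hUinv']; noncomm_ring
  rw [hNeq, Matrix.trace_mul_comm]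
  calc (SBd * SW * Uᵀ * U⁻¹ᵀ).trace = (SBd * SW * (Uᵀ * U⁻¹ᵀ)).trace := by rw [Matrix.mul_assoc]
  _ = (SBd * SW).trace := by rw [hUTinv, Matrix.mul_one]
end
end
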